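/- There exist constants η1, η2 > 0 such that for every integer n ≥ 1, e^{−η2 n^γ} ≤ m({x ∈ Y : R(x) ≥ n}) ≤ e^{−η1 n^γ}; that is, the first return time to Y has stretched exponential tails of order exactly γ with respect to Lebesgue measure. -/

import Mathlib

open MeasureTheory Set

/-- The interval map `T` of the example: `T(x) = x (1 + c / |log x|^β)` on `(0, 1/2]`
with `β = 1/γ - 1`, `c = (log 2)^β`, `T(x) = 2x - 1` on `(1/2, 1]`, and `T(0) = 0`. -/
noncomputable def Tmap (γ : ℝ) (x : ℝ) : ℝ :=
  if x ≤ 0 then 0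
  else if x ≤ 1 / 2 then x * (1 + (Real.log 2) ^ (1 / γ - 1) / |Real.log x| ^ (1 / γ - 1))
  else 2 * x - 1

/-- The first return time to the basis `Y = (1/2, 1]`. -/
noncomputable def retTime (γ : ℝ) (x : ℝ) : ℕ :=
  sInf {k : ℕ | 1 ≤ k ∧ (Tmap γ)^[k] x ∈ Set.Ioc (1 / 2 : ℝ) 1}

namespace STail
noncomputable def uu (x : ℝ) : ℝ := -Real.log x
noncomputable def cc (γ : ℝ) : ℝ := Real.log 2 ^ (1/γ - 1)
lemma hl2 : (0:ℝ) < Real.log 2 := Real.log_pos one_lt_two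
lemma cc_pos {γ:ℝ} : 0 < cc γ := Real.rpow_pos_of_pos hl2 _
lemma hβ {γ:ℝ} (hγ0 : 0 < γ) (hγ1 : γ ≤ 1) : 0 ≤ 1/γ - 1 := by
  rw [sub_nonneg, le_div_iff₀ hγ0]; linarith
variable {γ : ℝ}

lemma uu_ge {x : ℝ} (hx : x ∈ Set.Ioc (0:ℝ) (1/2)) : Real.log 2 ≤ uu x := by
  have h := Real.log_le_log hx.1 (hx.2.trans_eq (by norm_num : (1/2:ℝ) = 2⁻¹))
  rw [Real.log_inv] at h
  unfold uu; linarith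

lemma uu_nonneg {x : ℝ} (h0 : 0 < x) (h1 : x ≤ 1) : 0 ≤ uu x := by
  have := Real.log_nonpos h0.le h1
  unfold uu; linarith

lemma Tmap_left (hγ0 : 0 < γ) {x : ℝ} (hx : x ∈ Set.Ioc (0:ℝ) (1/2)) :
    Tmap γ x = x * (1 + cc γ / uu x ^ (1/γ - 1)) := by
  have h0 : ¬ x ≤ 0 := not_le.2 hx.1
  have hlt1 : x < 1 := lt_of_le_of_lt hx.2 (by norm_num)
  have habs : |Real.log x| = uu x := abs_of_neg (Real.log_neg hx.1 hlt1)
  rw [Tmap, if_neg h0, if_pos hx.2, habs]; rfl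

lemma tt_mem (hγ0 : 0 < γ) (hγ1 : γ ≤ 1) {x : ℝ} (hx : x ∈ Set.Ioc (0:ℝ) (1/2)) :
    0 < cc γ / uu x ^ (1/γ - 1) ∧ cc γ / uu x ^ (1/γ - 1) ≤ 1 := by
  have hu : Real.log 2 ≤ uu x := uu_ge hx
  have hupos : 0 < uu x := lt_of_lt_of_le hl2 hu
  have hpow : cc γ ≤ uu x ^ (1/γ - 1) :=
    Real.rpow_le_rpow hl2.le hu (hβ hγ0 hγ1)
  have hpp : (0:ℝ) < uu x ^ (1/γ - 1) := Real.rpow_pos_of_pos hupos _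
  exact ⟨div_pos cc_pos hpp, (div_le_one hpp).2 hpow⟩

lemma Tmap_pos (hγ0 : 0 < γ) (hγ1 : γ ≤ 1) {x : ℝ} (hx : x ∈ Set.Ioc (0:ℝ) (1/2)) :
    0 < Tmap γ x := by
  rw [Tmap_left hγ0 hx]
  have := (tt_mem hγ0 hγ1 hx).1
  nlinarith [hx.1]

lemma Tmap_le (hγ0 : 0 < γ) (hγ1 : γ ≤ 1) {x : ℝ} (hx : x ∈ Set.Ioc (0:ℝ) (1/2)) :
    Tmap γ x ≤ 2 * x := by
  rw [Tmap_left hγ0 hx]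
  have := (tt_mem hγ0 hγ1 hx).2
  nlinarith [hx.1]

lemma Tmap_mem_Ioc (hγ0 : 0 < γ) (hγ1 : γ ≤ 1) {x : ℝ} (hx : x ∈ Set.Ioc (0:ℝ) (1/2)) :
    Tmap γ x ∈ Set.Ioc (0:ℝ) 1 :=
  ⟨Tmap_pos hγ0 hγ1 hx, (Tmap_le hγ0 hγ1 hx).trans (by linarith [hx.2])⟩

lemma uu_Tmap (hγ0 : 0 < γ) (hγ1 : γ ≤ 1) {x : ℝ} (hx : x ∈ Set.Ioc (0:ℝ) (1/2)) :
    uu (Tmap γ x) = uu x - Real.log (1 + cc γ / uu x ^ (1/γ - 1)) := by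
  have ht := (tt_mem hγ0 hγ1 hx).1
  rw [Tmap_left hγ0 hx]
  unfold uu at ht ⊢
  rw [Real.log_mul hx.1.ne' (by linarith)]
  ring

noncomputable def LL (γ : ℝ) : ℝ := Real.log 2 ^ (1/γ)
noncomputable def KK (γ : ℝ) : ℝ := (1/γ) * cc γ
noncomputable def dd (γ : ℝ) : ℝ := (1/γ) * (cc γ * (2:ℝ) ^ (-(1/γ - 1)) / 2)
noncomputable def vv (γ x : ℝ) : ℝ := uu x ^ (1/γ)

lemma hp1 (hγ0 : 0 < γ) (hγ1 : γ ≤ 1) : 1 ≤ 1/γ := by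
  rw [le_div_iff₀ hγ0]; linarith

lemma tangent {a b p : ℝ} (hb : 0 < b) (ha : 0 ≤ a) (hp : 1 ≤ p) :
    b ^ p + p * b ^ (p - 1) * (a - b) ≤ a ^ p := by
  have hs : -1 ≤ a / b - 1 := by
    have : 0 ≤ a / b := div_nonneg ha hb.le
    linarith
  have hB := one_add_mul_self_le_rpow_one_add hs hp
  have h2 : (1 : ℝ) + (a / b - 1) = a / b := by ring
  rw [h2] at hB
  have hbp : (0:ℝ) < b ^ p := Real.rpow_pos_of_pos hb p
  have hmain : (1 + p * (a / b - 1)) * b ^ p ≤ (a / b) ^ p * b ^ p :=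
    mul_le_mul_of_nonneg_right hB hbp.le
  have hdiv : (a / b) ^ p * b ^ p = a ^ p := by
    rw [Real.div_rpow ha hb.le, div_mul_cancel₀ _ hbp.ne']
  have hsub : b ^ (p - 1) = b ^ p / b := by
    rw [Real.rpow_sub hb, Real.rpow_one]
  calc b ^ p + p * b ^ (p - 1) * (a - b)
      = (1 + p * (a / b - 1)) * b ^ p := by
        rw [hsub]; field_simp
    _ ≤ (a / b) ^ p * b ^ p := hmain
    _ = a ^ p := hdiv

/-- single step: `v` decreases by at most `K`. -/
lemma step_lower (hγ0 : 0 < γ) (hγ1 : γ ≤ 1) {x : ℝ} (hx : x ∈ Set.Ioc (0:ℝ) (1/2)) :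
    vv γ x - KK γ ≤ vv γ (Tmap γ x) := by
  set t := cc γ / uu x ^ (1/γ - 1) with hto
  obtain ⟨ht0, ht1⟩ := tt_mem hγ0 hγ1 hx
  have hu2 : Real.log 2 ≤ uu x := uu_ge hx
  have hu : 0 < uu x := lt_of_lt_of_le hl2 hu2
  have hlog_le : Real.log (1 + t) ≤ t := by
    have := Real.log_le_sub_one_of_pos (x := 1 + t) (by linarith)
    linarith
  have hlog2 : Real.log (1 + t) ≤ Real.log 2 :=
    Real.log_le_log (by linarith) (by linarith)
  have hu' : uu (Tmap γ x) = uu x - Real.log (1 + t) := uu_Tmap hγ0 hγ1 hx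
  have hlognn : 0 ≤ Real.log (1 + t) := Real.log_nonneg (by linarith)
  have hu'nn : 0 ≤ uu (Tmap γ x) := by rw [hu']; linarith
  have hT := tangent (a := uu (Tmap γ x)) (b := uu x) hu hu'nn (hp1 hγ0 hγ1)
  -- uu x ^ (1/γ) + (1/γ) * uu x ^ (1/γ - 1) * (uu Tx - uu x) ≤ uu Tx ^ (1/γ)
  have hpow : (0:ℝ) < uu x ^ (1/γ - 1) := Real.rpow_pos_of_pos hu _
  have key : uu x ^ (1/γ - 1) * Real.log (1 + t) ≤ cc γ := by
    calc uu x ^ (1/γ - 1) * Real.log (1 + t) ≤ uu x ^ (1/γ - 1) * t :=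
          mul_le_mul_of_nonneg_left hlog_le hpow.le
      _ = cc γ := by rw [hto]; field_simp
  have hγpos : (0:ℝ) < 1/γ := by positivity
  unfold vv KK
  rw [hu'] at hT ⊢
  nlinarith [hT, key, hγpos]


/-- single step: `v` decreases by at least `δ`, while staying in the left part. -/
lemma step_upper (hγ0 : 0 < γ) (hγ1 : γ ≤ 1) {x : ℝ} (hx : x ∈ Set.Ioc (0:ℝ) (1/2))
    (hT : Tmap γ x ≤ 1/2) :
    vv γ (Tmap γ x) ≤ vv γ x - dd γ := by
  set t := cc γ / uu x ^ (1/γ - 1) with hto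
  obtain ⟨ht0, ht1⟩ := tt_mem hγ0 hγ1 hx
  have hu2 : Real.log 2 ≤ uu x := uu_ge hx
  have hu : 0 < uu x := lt_of_lt_of_le hl2 hu2
  have hTx : Tmap γ x ∈ Set.Ioc (0:ℝ) (1/2) := ⟨Tmap_pos hγ0 hγ1 hx, hT⟩
  have hu'2 : Real.log 2 ≤ uu (Tmap γ x) := uu_ge hTx
  have hu' : 0 < uu (Tmap γ x) := lt_of_lt_of_le hl2 hu'2
  have hueq : uu (Tmap γ x) = uu x - Real.log (1 + t) := uu_Tmap hγ0 hγ1 hx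
  have hinv : (0:ℝ) < 1 + t := by linarith
  have hlog_ge : t/2 ≤ Real.log (1 + t) := by
    have h := Real.log_le_sub_one_of_pos (inv_pos.2 hinv)
    rw [Real.log_inv] at h
    have h2 : (1+t)⁻¹ ≤ 1 - t/2 := by
      rw [inv_eq_one_div, div_le_iff₀ hinv]; nlinarith
    linarith
  have hlog2 : Real.log (1 + t) ≤ Real.log 2 :=
    Real.log_le_log (by linarith) (by linarith)
  have hβ' : 0 ≤ 1/γ - 1 := hβ hγ0 hγ1
  have hpowu : (0:ℝ) < uu x ^ (1/γ - 1) := Real.rpow_pos_of_pos hu _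
  have hpowu' : (0:ℝ) < uu (Tmap γ x) ^ (1/γ - 1) := Real.rpow_pos_of_pos hu' _
  have h2β : (0:ℝ) < (2:ℝ) ^ (1/γ - 1) := Real.rpow_pos_of_pos two_pos _
  have h2βneg : ((2:ℝ) ^ (-(1/γ - 1))) = ((2:ℝ) ^ (1/γ - 1))⁻¹ := by
    rw [Real.rpow_neg (by norm_num)]
  -- the key product bound
  have key : cc γ * (2:ℝ) ^ (-(1/γ - 1)) / 2
      ≤ uu (Tmap γ x) ^ (1/γ - 1) * Real.log (1 + t) := by
    rcases le_or_gt (2 * Real.log 2) (uu x) with hcase | hcase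
    · -- u ≥ 2 log 2
      have hhalf : uu x / 2 ≤ uu (Tmap γ x) := by
        rw [hueq]; linarith
      have hmon : (uu x / 2) ^ (1/γ - 1) ≤ uu (Tmap γ x) ^ (1/γ - 1) :=
        Real.rpow_le_rpow (by positivity) hhalf hβ'
      have hdivpow : (uu x / 2) ^ (1/γ - 1)
          = uu x ^ (1/γ - 1) * ((2:ℝ) ^ (1/γ - 1))⁻¹ := by
        rw [Real.div_rpow hu.le (by norm_num)]; ring
      have hlogt : cc γ / uu x ^ (1/γ - 1) / 2 ≤ Real.log (1 + t) := by
        rw [hto] at hlog_ge ⊢; linarith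
      calc cc γ * (2:ℝ) ^ (-(1/γ - 1)) / 2
          = (uu x ^ (1/γ - 1) * ((2:ℝ) ^ (1/γ - 1))⁻¹)
              * (cc γ / uu x ^ (1/γ - 1) / 2) := by
            rw [h2βneg]; field_simp
        _ ≤ uu (Tmap γ x) ^ (1/γ - 1) * Real.log (1 + t) := by
            apply mul_le_mul (hdivpow ▸ hmon) hlogt (by positivity) hpowu'.le
    · -- log 2 ≤ u < 2 log 2
      have hccle : cc γ ≤ uu (Tmap γ x) ^ (1/γ - 1) :=
        Real.rpow_le_rpow hl2.le hu'2 hβ'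
      have hub : uu x ^ (1/γ - 1) ≤ (2:ℝ) ^ (1/γ - 1) * cc γ := by
        have : uu x ^ (1/γ - 1) ≤ (2 * Real.log 2) ^ (1/γ - 1) :=
          Real.rpow_le_rpow hu.le hcase.le hβ'
        rwa [Real.mul_rpow (by norm_num) hl2.le] at this
      have htge : ((2:ℝ) ^ (1/γ - 1))⁻¹ ≤ t := by
        rw [hto]
        rw [inv_eq_one_div, div_le_div_iff₀ h2β hpowu]
        calc 1 * uu x ^ (1/γ - 1) ≤ (2:ℝ) ^ (1/γ - 1) * cc γ := by linarith
          _ = cc γ * (2:ℝ) ^ (1/γ - 1) := by ring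
      calc cc γ * (2:ℝ) ^ (-(1/γ - 1)) / 2
          = cc γ * (((2:ℝ) ^ (1/γ - 1))⁻¹ / 2) := by rw [h2βneg]; ring
        _ ≤ uu (Tmap γ x) ^ (1/γ - 1) * Real.log (1 + t) := by
            apply mul_le_mul hccle (by linarith) (by positivity) hpowu'.le
  -- tangent inequality at u' with a = u
  have hT2 := tangent (a := uu x) (b := uu (Tmap γ x)) hu' hu.le (hp1 hγ0 hγ1)
  have hγpos : (0:ℝ) < 1/γ := by positivity
  have hfin : (1/γ) * (cc γ * (2:ℝ) ^ (-(1/γ - 1)) / 2)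
      ≤ (1/γ) * (uu (Tmap γ x) ^ (1/γ - 1) * Real.log (1 + t)) :=
    mul_le_mul_of_nonneg_left key hγpos.le
  have hsub : uu x - uu (Tmap γ x) = Real.log (1 + t) := by rw [hueq]; ring
  rw [hsub] at hT2
  unfold vv dd
  linarith [hT2, hfin]


lemma LL_pos : 0 < LL γ := Real.rpow_pos_of_pos hl2 _
lemma KK_pos (hγ0 : 0 < γ) : 0 < KK γ := mul_pos (by positivity) cc_pos
lemma dd_pos (hγ0 : 0 < γ) : 0 < dd γ := by
  have h1 : (0:ℝ) < (2:ℝ) ^ (-(1/γ - 1)) := Real.rpow_pos_of_pos two_pos _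
  have h2 : (0:ℝ) < cc γ := cc_pos
  unfold dd; positivity

lemma vv_ge_LL (hγ0 : 0 < γ) {y : ℝ} (hy : y ∈ Set.Ioc (0:ℝ) (1/2)) : LL γ ≤ vv γ y :=
  Real.rpow_le_rpow hl2.le (uu_ge hy) (by positivity)

lemma le_half_of_vv (hγ0 : 0 < γ) {y : ℝ} (h0 : 0 < y) (h1 : y ≤ 1)
    (h : LL γ ≤ vv γ y) : y ≤ 1/2 := by
  have huy : Real.log 2 ≤ uu y :=
    (Real.rpow_le_rpow_iff hl2.le (uu_nonneg h0 h1) (by positivity)).mp h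
  have hlog : Real.log y ≤ Real.log (2⁻¹) := by
    rw [Real.log_inv]; unfold uu at huy; linarith
  have := (Real.log_le_log_iff h0 (by norm_num)).mp hlog
  linarith

lemma stay (hγ0 : 0 < γ) (hγ1 : γ ≤ 1) (n : ℕ) {y : ℝ}
    (h : ∀ j ≤ n, (Tmap γ)^[j] y ∈ Set.Ioc (0:ℝ) (1/2)) :
    (n:ℝ) * dd γ + LL γ ≤ vv γ y := by
  induction n generalizing y with
  | zero =>
    have h0 : y ∈ Set.Ioc (0:ℝ) (1/2) := by simpa using h 0 le_rfl
    simpa using vv_ge_LL hγ0 h0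
  | succ n ih =>
    have h0 : y ∈ Set.Ioc (0:ℝ) (1/2) := by simpa using h 0 (by omega)
    have h1 : Tmap γ y ∈ Set.Ioc (0:ℝ) (1/2) := by
      have := h 1 (by omega); simpa using this
    have ih' := ih (y := Tmap γ y) (fun j hj => by
      have := h (j+1) (by omega)
      rwa [Function.iterate_succ_apply] at this)
    have hstep := step_upper hγ0 hγ1 h0 h1.2
    push_cast
    linarith

lemma enter (hγ0 : 0 < γ) (hγ1 : γ ≤ 1) (n : ℕ) {y : ℝ}
    (hy : y ∈ Set.Ioc (0:ℝ) (1/2)) (hv : (n:ℝ) * KK γ + LL γ ≤ vv γ y) :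
    ∀ j ≤ n, (Tmap γ)^[j] y ∈ Set.Ioc (0:ℝ) (1/2) := by
  induction n generalizing y with
  | zero =>
    intro j hj
    have : j = 0 := by omega
    simpa [this] using hy
  | succ n ih =>
    have hK := KK_pos (γ := γ) hγ0
    have hTy : Tmap γ y ∈ Set.Ioc (0:ℝ) 1 := Tmap_mem_Ioc hγ0 hγ1 hy
    have hstep := step_lower hγ0 hγ1 hy
    have hvt : (n:ℝ) * KK γ + LL γ ≤ vv γ (Tmap γ y) := by
      push_cast at hv; linarith
    have hnn : (0:ℝ) ≤ (n:ℝ) * KK γ := by positivity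
    have hTy2 : Tmap γ y ≤ 1/2 :=
      le_half_of_vv hγ0 hTy.1 hTy.2 (by linarith)
    intro j hj
    cases j with
    | zero => simpa using hy
    | succ j =>
      rw [Function.iterate_succ_apply]
      exact ih ⟨hTy.1, hTy2⟩ hvt j (by omega)

lemma escape (hγ0 : 0 < γ) (hγ1 : γ ≤ 1) {y : ℝ} (hy : y ∈ Set.Ioc (0:ℝ) (1/2)) :
    ∃ m : ℕ, (Tmap γ)^[m] y ∈ Set.Ioc (1/2:ℝ) 1 := by
  classical
  obtain ⟨n, hn⟩ := exists_nat_gt ((vv γ y - LL γ) / dd γ)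
  have hdd := dd_pos (γ := γ) hγ0
  have hex : ∃ j, (Tmap γ)^[j] y ∉ Set.Ioc (0:ℝ) (1/2) := by
    by_contra hno
    push_neg at hno
    have := stay hγ0 hγ1 n (fun j _ => hno j)
    rw [div_lt_iff₀ hdd] at hn
    linarith
  obtain ⟨j0, hj0P, hj0min⟩ : ∃ j0, ((Tmap γ)^[j0] y ∉ Set.Ioc (0:ℝ) (1/2)) ∧
      ∀ i < j0, ¬ ((Tmap γ)^[i] y ∉ Set.Ioc (0:ℝ) (1/2)) :=
    ⟨Nat.find hex, Nat.find_spec hex, fun i hi => Nat.find_min hex hi⟩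
  have hj0pos : 0 < j0 := by
    rcases Nat.eq_zero_or_pos j0 with h | h
    · subst h; exact absurd hy (by simpa using hj0P)
    · exact h
  have hprev : (Tmap γ)^[j0 - 1] y ∈ Set.Ioc (0:ℝ) (1/2) :=
    not_not.mp (hj0min (j0 - 1) (by omega))
  have hiter : (Tmap γ)^[j0] y = Tmap γ ((Tmap γ)^[j0-1] y) := by
    conv_lhs => rw [show j0 = (j0-1) + 1 by omega]
    rw [Function.iterate_succ_apply']
  have hmem : (Tmap γ)^[j0] y ∈ Set.Ioc (0:ℝ) 1 := by
    rw [hiter]; exact Tmap_mem_Ioc hγ0 hγ1 hprev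
  refine ⟨j0, ?_, hmem.2⟩
  by_contra hle
  push_neg at hle
  exact hj0P ⟨hmem.1, hle⟩

lemma Tmap_right {x : ℝ} (hx : x ∈ Set.Ioc (1/2:ℝ) 1) : Tmap γ x = 2*x - 1 := by
  have h1 : ¬ x ≤ 0 := by push_neg; linarith [hx.1]
  have h2 : ¬ x ≤ 1/2 := not_le.2 hx.1
  rw [Tmap, if_neg h1, if_neg h2]

lemma Tmap_mem' (hγ0 : 0 < γ) (hγ1 : γ ≤ 1) {z : ℝ} (hz : z ∈ Set.Ioc (0:ℝ) 1) :
    Tmap γ z ∈ Set.Ioc (0:ℝ) 1 := by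
  rcases le_or_gt z (1/2) with h | h
  · exact Tmap_mem_Ioc hγ0 hγ1 ⟨hz.1, h⟩
  · rw [Tmap_right ⟨h, hz.2⟩]
    constructor <;> [linarith; linarith [hz.2]]

lemma iter_mem (hγ0 : 0 < γ) (hγ1 : γ ≤ 1) {x : ℝ} (hx : x ∈ Set.Ioc (0:ℝ) 1) (k : ℕ) :
    (Tmap γ)^[k] x ∈ Set.Ioc (0:ℝ) 1 := by
  induction k with
  | zero => simpa using hx
  | succ k ih =>
    rw [Function.iterate_succ_apply']
    exact Tmap_mem' hγ0 hγ1 ih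

lemma retSet_nonempty (hγ0 : 0 < γ) (hγ1 : γ ≤ 1) {x : ℝ} (hx : x ∈ Set.Ioc (1/2:ℝ) 1) :
    {k : ℕ | 1 ≤ k ∧ (Tmap γ)^[k] x ∈ Set.Ioc (1/2:ℝ) 1}.Nonempty := by
  have hTx : Tmap γ x = 2*x-1 := Tmap_right hx
  have h0 : 0 < 2*x - 1 := by linarith [hx.1]
  have h1 : 2*x - 1 ≤ 1 := by linarith [hx.2]
  rcases le_or_gt (2*x-1) (1/2) with hc | hc
  · obtain ⟨m, hm⟩ := escape hγ0 hγ1 (y := 2*x-1) ⟨h0, hc⟩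
    refine ⟨m+1, by omega, ?_⟩
    rw [Function.iterate_succ_apply, hTx]
    exact hm
  · exact ⟨1, le_rfl, by rw [Function.iterate_one, hTx]; exact ⟨hc, h1⟩⟩

lemma retTime_ge_iff (hγ0 : 0 < γ) (hγ1 : γ ≤ 1) {x : ℝ} (hx : x ∈ Set.Ioc (1/2:ℝ) 1)
    {n : ℕ} :
    n ≤ retTime γ x ↔ ∀ k, 1 ≤ k → k < n → (Tmap γ)^[k] x ∈ Set.Ioc (0:ℝ) (1/2) := by
  have hNE := retSet_nonempty hγ0 hγ1 hx
  constructor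
  · intro h k hk1 hkn
    have hknot : k ∉ {k : ℕ | 1 ≤ k ∧ (Tmap γ)^[k] x ∈ Set.Ioc (1/2:ℝ) 1} :=
      Nat.notMem_of_lt_sInf (lt_of_lt_of_le hkn h)
    have hx01 : x ∈ Set.Ioc (0:ℝ) 1 := ⟨lt_trans (by norm_num) hx.1, hx.2⟩
    have hmem : (Tmap γ)^[k] x ∈ Set.Ioc (0:ℝ) 1 := iter_mem hγ0 hγ1 hx01 k
    refine ⟨hmem.1, ?_⟩
    by_contra hgt
    push_neg at hgt
    exact hknot ⟨hk1, hgt, hmem.2⟩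
  · intro h
    refine le_csInf hNE ?_
    intro k hk
    by_contra hlt
    push_neg at hlt
    exact absurd hk.2.1 (not_lt.2 (h k hk.1 hlt).2)

lemma retTime_pos (hγ0 : 0 < γ) (hγ1 : γ ≤ 1) {x : ℝ} (hx : x ∈ Set.Ioc (1/2:ℝ) 1) :
    1 ≤ retTime γ x :=
  (Nat.sInf_mem (retSet_nonempty hγ0 hγ1 hx)).1


lemma roundtrip1 (hγ0 : 0 < γ) {z : ℝ} (hz : 0 ≤ z) : (z ^ (1/γ)) ^ γ = z := by
  rw [← Real.rpow_mul hz, one_div, inv_mul_cancel₀ hγ0.ne', Real.rpow_one]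

lemma roundtrip2 (hγ0 : 0 < γ) {z : ℝ} (hz : 0 ≤ z) : (z ^ γ) ^ (1/γ) = z := by
  rw [← Real.rpow_mul hz, one_div, mul_inv_cancel₀ hγ0.ne', Real.rpow_one]

/-- upper inclusion -/
lemma upper_incl (hγ0 : 0 < γ) (hγ1 : γ ≤ 1) {n : ℕ} (hn2 : 2 ≤ n) :
    {x ∈ Set.Ioc (1/2:ℝ) 1 | n ≤ retTime γ x} ⊆
      Set.Ioc (1/2:ℝ) ((1 + Real.exp (-((((n:ℝ) - 2) * dd γ + LL γ) ^ γ)))/2) := by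
  set A := ((n:ℝ) - 2) * dd γ + LL γ with hA
  have hn2' : (2:ℝ) ≤ (n:ℝ) := by exact_mod_cast hn2
  have hA0 : 0 < A := by
    have := dd_pos (γ := γ) hγ0
    have := LL_pos (γ := γ)
    have : (0:ℝ) ≤ ((n:ℝ) - 2) * dd γ :=
      mul_nonneg (by linarith) (dd_pos hγ0).le
    unfold A
    nlinarith [LL_pos (γ := γ)]
  rintro x ⟨hxY, hret⟩
  have hk := (retTime_ge_iff hγ0 hγ1 hxY).mp hret
  have hTx : Tmap γ x = 2*x - 1 := Tmap_right hxY
  have hw : Tmap γ x ∈ Set.Ioc (0:ℝ) (1/2) := by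
    have := hk 1 le_rfl (by omega)
    simpa using this
  have hyIoc : ∀ j ≤ n - 2, (Tmap γ)^[j] (Tmap γ x) ∈ Set.Ioc (0:ℝ) (1/2) := by
    intro j hj
    have := hk (j+1) (by omega) (by omega)
    rwa [Function.iterate_succ_apply] at this
  have hst := stay hγ0 hγ1 (n-2) hyIoc
  have hq : ((n - 2 : ℕ) : ℝ) = (n:ℝ) - 2 := by
    push_cast [Nat.cast_sub hn2]; ring
  rw [hq] at hst
  -- hst : A ≤ vv γ (Tmap γ x)
  have hwnn : 0 ≤ uu (Tmap γ x) := uu_nonneg hw.1 (by linarith [hw.2])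
  have huuw : A ^ γ ≤ uu (Tmap γ x) := by
    have h1 : A ^ γ ≤ (vv γ (Tmap γ x)) ^ γ :=
      Real.rpow_le_rpow hA0.le hst hγ0.le
    rwa [vv, roundtrip1 hγ0 hwnn] at h1
  have hxle : Tmap γ x ≤ Real.exp (-(A ^ γ)) := by
    have hlog : Real.log (Tmap γ x) ≤ -(A ^ γ) := by
      unfold uu at huuw; linarith
    calc Tmap γ x = Real.exp (Real.log (Tmap γ x)) := (Real.exp_log hw.1).symm
      _ ≤ Real.exp (-(A ^ γ)) := Real.exp_le_exp.mpr hlog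
  rw [hTx] at hxle
  exact ⟨hxY.1, by linarith⟩

/-- lower inclusion -/
lemma lower_incl (hγ0 : 0 < γ) (hγ1 : γ ≤ 1) {n : ℕ} (hn2 : 2 ≤ n) :
    Set.Ioc (1/2:ℝ) ((1 + Real.exp (-((((n:ℝ) - 2) * KK γ + LL γ) ^ γ)))/2) ⊆
      {x ∈ Set.Ioc (1/2:ℝ) 1 | n ≤ retTime γ x} := by
  set B := ((n:ℝ) - 2) * KK γ + LL γ with hB
  have hn2' : (2:ℝ) ≤ (n:ℝ) := by exact_mod_cast hn2
  have hKnn : (0:ℝ) ≤ ((n:ℝ) - 2) * KK γ := mul_nonneg (by linarith) (KK_pos hγ0).le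
  have hLpos := LL_pos (γ := γ)
  have hB0 : 0 < B := by unfold B; linarith
  have hBL : LL γ ≤ B := by unfold B; linarith
  have hBγl2 : Real.log 2 ≤ B ^ γ := by
    have h1 : (LL γ) ^ γ ≤ B ^ γ := Real.rpow_le_rpow hLpos.le hBL hγ0.le
    rwa [LL, roundtrip1 hγ0 hl2.le] at h1
  have he' : Real.exp (-(B ^ γ)) ≤ 1/2 := by
    have h1 : Real.exp (-(B ^ γ)) ≤ Real.exp (-(Real.log 2)) :=
      Real.exp_le_exp.mpr (by linarith)
    have h2 : Real.exp (-(Real.log 2)) = 1/2 := by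
      rw [Real.exp_neg, Real.exp_log two_pos]; norm_num
    linarith
  intro x hx
  have hxY : x ∈ Set.Ioc (1/2:ℝ) 1 := ⟨hx.1, by linarith [hx.2, he']⟩
  have hTx : Tmap γ x = 2*x - 1 := Tmap_right hxY
  have hy0 : 0 < 2*x - 1 := by linarith [hx.1]
  have hyle : 2*x - 1 ≤ Real.exp (-(B ^ γ)) := by linarith [hx.2]
  have hy2 : 2*x - 1 ≤ 1/2 := le_trans hyle he'
  have huy : B ^ γ ≤ uu (2*x - 1) := by
    have hlog : Real.log (2*x-1) ≤ Real.log (Real.exp (-(B ^ γ))) :=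
      Real.log_le_log hy0 hyle
    rw [Real.log_exp] at hlog
    unfold uu; linarith
  have hvy : B ≤ vv γ (2*x - 1) := by
    have h1 : (B ^ γ) ^ (1/γ) ≤ (uu (2*x-1)) ^ (1/γ) :=
      Real.rpow_le_rpow (Real.rpow_nonneg hB0.le γ) huy (by positivity)
    rwa [roundtrip2 hγ0 hB0.le] at h1
  have hq : ((n - 2 : ℕ) : ℝ) = (n:ℝ) - 2 := by
    push_cast [Nat.cast_sub hn2]; ring
  have hent := enter hγ0 hγ1 (n-2) ⟨hy0, hy2⟩ (by rw [hq]; exact hvy)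
  refine ⟨hxY, (retTime_ge_iff hγ0 hγ1 hxY).mpr ?_⟩
  intro k hk1 hkn
  have : (Tmap γ)^[k] x = (Tmap γ)^[k-1] (Tmap γ x) := by
    conv_lhs => rw [show k = (k-1) + 1 by omega]
    rw [Function.iterate_succ_apply]
  rw [this, hTx]
  exact hent (k-1) (by omega)

end STail

/-- The first return time to `Y = (1/2, 1]` has stretched exponential tails of order
exactly `γ` with respect to Lebesgue measure: there are `η1, η2 > 0` such that for every
`n ≥ 1`, `e^{-η2 n^γ} ≤ m(R ≥ n) ≤ e^{-η1 n^γ}`. -/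
theorem stmt2 (γ : ℝ) (hγ0 : 0 < γ) (hγ1 : γ ≤ 1) :
    ∃ η1 η2 : ℝ, 0 < η1 ∧ 0 < η2 ∧
      ∀ n : ℕ, 1 ≤ n →
        ENNReal.ofReal (Real.exp (-η2 * (n : ℝ) ^ γ)) ≤
            volume {x ∈ Set.Ioc (1 / 2 : ℝ) 1 | n ≤ retTime γ x} ∧
        volume {x ∈ Set.Ioc (1 / 2 : ℝ) 1 | n ≤ retTime γ x} ≤
            ENNReal.ofReal (Real.exp (-η1 * (n : ℝ) ^ γ)) := by
  classical
  have hl2 : (0:ℝ) < Real.log 2 := STail.hl2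
  have hdd := STail.dd_pos (γ := γ) hγ0
  have hLL := STail.LL_pos (γ := γ)
  have hKK := STail.KK_pos (γ := γ) hγ0
  set a := min (STail.dd γ / 2) (STail.LL γ / 4) with ha_def
  have ha : 0 < a := lt_min (by linarith) (by linarith)
  refine ⟨min (a ^ γ) (Real.log 2), (STail.KK γ + STail.LL γ) ^ γ + Real.log 2,
    lt_min (Real.rpow_pos_of_pos ha γ) hl2,
    add_pos (Real.rpow_pos_of_pos (by linarith) γ) hl2, ?_⟩
  intro n hn
  have hexpneg : Real.exp (-(Real.log 2)) = 1/2 := by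
    rw [Real.exp_neg, Real.exp_log two_pos]; norm_num
  rcases eq_or_lt_of_le hn with h1 | hn2
  · -- n = 1
    subst h1
    have hE : {x ∈ Set.Ioc (1/2:ℝ) 1 | 1 ≤ retTime γ x} = Set.Ioc (1/2:ℝ) 1 := by
      ext x
      constructor
      · rintro ⟨h, _⟩; exact h
      · intro h; exact ⟨h, STail.retTime_pos hγ0 hγ1 h⟩
    rw [hE, Real.volume_Ioc, show (1:ℝ) - 1/2 = 1/2 by norm_num]
    have hcast : ((1:ℕ):ℝ) = 1 := by norm_num
    rw [hcast, Real.one_rpow]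
    constructor
    · apply ENNReal.ofReal_le_ofReal
      have h1 : Real.exp (-((STail.KK γ + STail.LL γ) ^ γ + Real.log 2) * 1)
          ≤ Real.exp (-(Real.log 2)) := by
        apply Real.exp_le_exp.mpr
        have : (0:ℝ) ≤ (STail.KK γ + STail.LL γ) ^ γ :=
          Real.rpow_nonneg (by linarith) γ
        linarith
      linarith [hexpneg ▸ h1]
    · apply ENNReal.ofReal_le_ofReal
      have h1 : Real.exp (-(Real.log 2)) ≤ Real.exp (-(min (a^γ) (Real.log 2)) * 1) := by
        apply Real.exp_le_exp.mpr
        have := min_le_right (a^γ) (Real.log 2)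
        linarith
      linarith [hexpneg ▸ h1]
  · -- 2 ≤ n
    have hn2 : 2 ≤ n := hn2
    have hub := STail.upper_incl hγ0 hγ1 hn2
    have hlb := STail.lower_incl hγ0 hγ1 hn2
    set A := ((n:ℝ) - 2) * STail.dd γ + STail.LL γ with hA_def
    set B := ((n:ℝ) - 2) * STail.KK γ + STail.LL γ with hB_def
    have hn2' : (2:ℝ) ≤ (n:ℝ) := by exact_mod_cast hn2
    have hn1 : (1:ℝ) ≤ (n:ℝ) := by linarith
    have hnγ1 : 1 ≤ (n:ℝ) ^ γ := Real.one_le_rpow hn1 hγ0.le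
    have hnγ0 : (0:ℝ) ≤ (n:ℝ) ^ γ := by linarith
    constructor
    · -- lower bound
      refine le_trans ?_ (measure_mono hlb)
      rw [Real.volume_Ioc,
        show (1 + Real.exp (-(B ^ γ)))/2 - 1/2 = Real.exp (-(B ^ γ))/2 by ring]
      apply ENNReal.ofReal_le_ofReal
      have hexp2 : Real.exp (-(B ^ γ))/2 = Real.exp (-(B ^ γ) - Real.log 2) := by
        rw [Real.exp_sub, Real.exp_log two_pos]
      rw [hexp2]
      apply Real.exp_le_exp.mpr
      have hB0 : (0:ℝ) ≤ B := by
        have : (0:ℝ) ≤ ((n:ℝ) - 2) * STail.KK γ := mul_nonneg (by linarith) hKK.le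
        unfold B; linarith
      have hBle : B ≤ (n:ℝ) * (STail.KK γ + STail.LL γ) := by
        unfold B; nlinarith [hKK.le, hLL.le]
      have h1 : B ^ γ ≤ ((n:ℝ) * (STail.KK γ + STail.LL γ)) ^ γ :=
        Real.rpow_le_rpow hB0 hBle hγ0.le
      rw [Real.mul_rpow (by linarith) (by linarith)] at h1
      have h2 : Real.log 2 ≤ Real.log 2 * (n:ℝ) ^ γ := by nlinarith
      nlinarith [h1, h2]
    · -- upper bound
      refine le_trans (measure_mono hub) ?_
      rw [Real.volume_Ioc,
        show (1 + Real.exp (-(A ^ γ)))/2 - 1/2 = Real.exp (-(A ^ γ))/2 by ring]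
      apply ENNReal.ofReal_le_ofReal
      have hhalf : Real.exp (-(A ^ γ))/2 ≤ Real.exp (-(A ^ γ)) := by
        linarith [Real.exp_pos (-(A ^ γ))]
      refine hhalf.trans (Real.exp_le_exp.mpr ?_)
      have haA : a * n ≤ A := by
        rcases le_total ((n:ℝ)) 4 with h4 | h4
        · have h1 : a ≤ STail.LL γ / 4 := min_le_right _ _
          unfold A; nlinarith [hdd.le]
        · have h1 : a ≤ STail.dd γ / 2 := min_le_left _ _
          unfold A; nlinarith [hLL.le, hdd.le]
      have h1 : (a * (n:ℝ)) ^ γ ≤ A ^ γ :=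
        Real.rpow_le_rpow (by positivity) haA hγ0.le
      rw [Real.mul_rpow ha.le (by linarith)] at h1
      have h2 : min (a ^ γ) (Real.log 2) * (n:ℝ) ^ γ ≤ a ^ γ * (n:ℝ) ^ γ :=
        mul_le_mul_of_nonneg_right (min_le_left _ _) hnγ0
      linarith [h1, h2]
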